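/- arXiv:1309.6129 — 4 statements merged into one kernel-verified Lean document; each statement's English description precedes it below -/
import Mathlib

section
/- For any ε ∈ (0,1), if K = (8ρ/ε)·log(8ρ/ε) + (4/ε)·log C + (4/ε)·log(1/ε) + 2 with ρ ≥ 1 and C ≥ 1, then C·(1-ε)^(K-1)·K^ρ ≤ ε. -/
theorem stmt_0 (ρ C ε K : ℝ) (hρ : 1 ≤ ρ) (hC : 1 ≤ C)
    (hε : ε ∈ Set.Ioo (0:ℝ) 1)
    (hK : K = 8 * ρ / ε * Real.log (8 * ρ / ε) + 4 / ε * Real.log C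
      + 4 / ε * Real.log (1 / ε) + 2) :
    C * (1 - ε) ^ (K - 1) * K ^ ρ ≤ ε := by
  obtain ⟨hε0, hε1⟩ := hε
  set a : ℝ := 8 * ρ / ε with ha
  have hρ0 : (0:ℝ) < ρ := by linarith
  have ha8 : (8:ℝ) ≤ a := by
    rw [ha, le_div_iff₀ hε0]; nlinarith
  have ha0 : (0:ℝ) < a := by linarith
  have hεa : ε * a = 8 * ρ := by
    rw [ha]; field_simp
  clear_value a
  have hinv1 : (1:ℝ) ≤ 1 / ε := by
    rw [le_div_iff₀ hε0]; linarith
  set L : ℝ := Real.log C + Real.log (1 / ε) with hLdef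
  have hL0 : 0 ≤ L := add_nonneg (Real.log_nonneg hC) (Real.log_nonneg hinv1)
  clear_value L
  have hKeq : K = a * Real.log a + 4 / ε * L + 2 := by
    rw [hK, hLdef, ha]; ring
  have hla0 : 0 ≤ Real.log a := Real.log_nonneg (by linarith)
  have hεinv : (4:ℝ) ≤ 4 / ε := by
    rw [le_div_iff₀ hε0]; linarith
  have haε : 4 / ε ≤ a := by
    rw [ha, div_le_div_iff₀ hε0 hε0]; nlinarith
  have hK2 : 2 ≤ K := by
    rw [hKeq]
    have h1 : 0 ≤ a * Real.log a := mul_nonneg (by linarith) hla0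
    have h2 : 0 ≤ 4 / ε * L := mul_nonneg (by linarith) hL0
    linarith
  have hK0 : (0:ℝ) < K := by linarith
  -- Bound K ≤ a^3 * (L + 1)
  have hloga : Real.log a ≤ a - 1 := Real.log_le_sub_one_of_pos ha0
  have hKbound : K ≤ a ^ 3 * (L + 1) := by
    rw [hKeq]
    have h1 : a * Real.log a + 2 ≤ a ^ 2 := by nlinarith
    have h2 : 4 / ε * L ≤ a * L := mul_le_mul_of_nonneg_right haε hL0
    have h3 : a * L ≤ a ^ 3 * L := mul_le_mul_of_nonneg_right (by nlinarith) hL0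
    have h4 : a ^ 2 ≤ a ^ 3 := by nlinarith
    have h5 : a ^ 3 * (L + 1) = a ^ 3 * L + a ^ 3 := by ring
    linarith
  have hL1 : (0:ℝ) < L + 1 := by linarith
  have hlogK : Real.log K ≤ 4 * Real.log a + L / ρ := by
    have h1 : Real.log K ≤ Real.log (a ^ 3 * (L + 1)) :=
      Real.log_le_log hK0 hKbound
    rw [Real.log_mul (by positivity) (by positivity), Real.log_pow] at h1
    have h2 : Real.log ((L + 1) / ρ) ≤ (L + 1) / ρ - 1 :=
      Real.log_le_sub_one_of_pos (by positivity)
    rw [Real.log_div (by positivity) (by positivity)] at h2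
    have h3 : Real.log ρ ≤ Real.log a := Real.log_le_log hρ0 (by nlinarith)
    have h4 : (L + 1) / ρ ≤ L / ρ + 1 := by
      rw [add_div]
      have : 1 / ρ ≤ 1 := by rw [div_le_one hρ0]; exact hρ
      linarith
    push_cast at h1
    linarith
  -- Key log inequality
  have hlogε : Real.log (1 / ε) = -Real.log ε := by
    rw [one_div, Real.log_inv]
  have hmain : Real.log C - ε * (K - 1) + ρ * Real.log K ≤ Real.log ε := by
    have h2 : ρ * (L / ρ) = L := by
      rw [mul_comm]; exact div_mul_cancel₀ L (ne_of_gt hρ0)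
    have h1 : ρ * Real.log K ≤ 4 * (ρ * Real.log a) + L := by
      calc ρ * Real.log K ≤ ρ * (4 * Real.log a + L / ρ) :=
            mul_le_mul_of_nonneg_left hlogK (by linarith)
        _ = 4 * (ρ * Real.log a) + ρ * (L / ρ) := by ring
        _ = 4 * (ρ * Real.log a) + L := by rw [h2]
    have h3 : ε * (K - 1) = 8 * ρ * Real.log a + 4 * L + ε := by
      have e1 : ε * (4 / ε * L) = 4 * L := by
        have : ε * (4 / ε * L) = ε * (4 / ε) * L := by ring
        rw [this, mul_div_cancel₀ 4 (ne_of_gt hε0)]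
      have e2 : ε * (a * Real.log a) = 8 * ρ * Real.log a := by
        rw [← hεa]; ring
      have e3 : ε * (K - 1) = ε * (a * Real.log a) + ε * (4 / ε * L) + ε := by
        rw [hKeq]; ring
      rw [e3, e1, e2]
    have h5 : Real.log ε = Real.log C - L := by rw [hLdef, hlogε]; ring
    have h6 : 0 ≤ ρ * Real.log a := mul_nonneg (by linarith) hla0
    linarith
  -- Assemble
  have hfac1 : (1 - ε) ^ (K - 1) ≤ Real.exp (-(ε * (K - 1))) := by
    have hb : 1 - ε ≤ Real.exp (-ε) := by
      have := Real.add_one_le_exp (-ε); linarith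
    calc (1 - ε) ^ (K - 1) ≤ (Real.exp (-ε)) ^ (K - 1) :=
          Real.rpow_le_rpow (by linarith) hb (by linarith)
      _ = Real.exp (-(ε * (K - 1))) := by
          rw [← Real.exp_mul]; ring_nf
  have hKρ : K ^ ρ = Real.exp (ρ * Real.log K) := by
    rw [Real.rpow_def_of_pos hK0, mul_comm]
  have hCe : C = Real.exp (Real.log C) := (Real.exp_log (by linarith)).symm
  calc C * (1 - ε) ^ (K - 1) * K ^ ρ
      ≤ Real.exp (Real.log C) * Real.exp (-(ε * (K - 1))) * Real.exp (ρ * Real.log K) := by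
        rw [← hCe, ← hKρ]
        have h1 : 0 ≤ (1 - ε) ^ (K - 1) := Real.rpow_nonneg (by linarith) _
        have h2 : 0 < K ^ ρ := Real.rpow_pos_of_pos hK0 _
        have : C * (1 - ε) ^ (K - 1) ≤ C * Real.exp (-(ε * (K - 1))) :=
          mul_le_mul_of_nonneg_left hfac1 (by linarith)
        exact mul_le_mul_of_nonneg_right this (le_of_lt h2)
    _ = Real.exp (Real.log C - ε * (K - 1) + ρ * Real.log K) := by
        rw [← Real.exp_add, ← Real.exp_add]; ring_nf
    _ ≤ Real.exp (Real.log ε) := Real.exp_le_exp.mpr hmain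
    _ = ε := Real.exp_log hε0
end

section
/- Consider a pairwise MRF on a finite graph G = (V,E) with energy H(x̄) = ∑_{i∈V} ln φ_i(x_i) + ∑_{(i,j)∈E} ln ψ_{ij}(x_i,x_j), where ln φ_i ≥ 0 and ln ψ_{ij} ≥ 0 pointwise. If G has maximum degree d*, then (d*+1)·max_{x̄} H(x̄) ≥ ∑_{(i,j)∈E} (ψ^U_{ij} - ψ^L_{ij}), where ψ^U_{ij} = max_{σ,σ'} ln ψ_{ij}(σ,σ') and ψ^L_{ij} = min_{σ,σ'} ln ψ_{ij}(σ,σ'). -/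
open Finset

section VizingBasics

variable {V : Type*} [DecidableEq V]
set_option linter.unusedSectionVars false

/-- edge `p` touches vertex `v` -/
def EVtouch (p : V × V) (v : V) : Prop := p.1 = v ∨ p.2 = v

instance (p : V × V) (v : V) : Decidable (EVtouch p v) := by
  unfold EVtouch; infer_instance

/-- two edges share a vertex -/
def EVshare (p q : V × V) : Prop := p.1 = q.1 ∨ p.1 = q.2 ∨ p.2 = q.1 ∨ p.2 = q.2

lemma EVshare_iff {p q : V × V} : EVshare p q ↔ ∃ v, EVtouch p v ∧ EVtouch q v := by
  unfold EVshare EVtouch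
  constructor
  · rintro (h | h | h | h)
    · exact ⟨q.1, Or.inl h, Or.inl rfl⟩
    · exact ⟨q.2, Or.inl h, Or.inr rfl⟩
    · exact ⟨q.1, Or.inr h, Or.inl rfl⟩
    · exact ⟨q.2, Or.inr h, Or.inr rfl⟩
  · rintro ⟨v, (h1 | h1), (h2 | h2)⟩
    · exact Or.inl (h1.trans h2.symm)
    · exact Or.inr (Or.inl (h1.trans h2.symm))
    · exact Or.inr (Or.inr (Or.inl (h1.trans h2.symm)))
    · exact Or.inr (Or.inr (Or.inr (h1.trans h2.symm)))

lemma EVshare_symm {p q : V × V} (h : EVshare p q) : EVshare q p := by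
  rw [EVshare_iff] at h ⊢; obtain ⟨v, h1, h2⟩ := h; exact ⟨v, h2, h1⟩

variable {n : ℕ}

/-- proper edge coloring on `A` -/
def EProper (A : Finset (V × V)) (col : V × V → Fin n) : Prop :=
  ∀ p ∈ A, ∀ q ∈ A, p ≠ q → EVshare p q → col p ≠ col q

/-- color `k` is free at vertex `v` -/
def EFree (A : Finset (V × V)) (col : V × V → Fin n) (v : V) (k : Fin n) : Prop :=
  ∀ p ∈ A, EVtouch p v → col p ≠ k

lemma exists_free {A : Finset (V × V)} {col : V × V → Fin n} {v : V}
    (h : (A.filter (fun p => EVtouch p v)).card < n) :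
    ∃ k : Fin n, EFree A col v k := by
  have himg : ((A.filter (fun p => EVtouch p v)).image col).card < n := by
    exact lt_of_le_of_lt (Finset.card_image_le) h
  have hns : ¬ (Finset.univ : Finset (Fin n)) ⊆ ((A.filter (fun p => EVtouch p v)).image col) := by
    intro hsub
    have := Finset.card_le_card hsub
    rw [Finset.card_univ, Fintype.card_fin] at this
    omega
  obtain ⟨k, -, hk⟩ := Finset.not_subset.mp hns
  refine ⟨k, fun p hp ht hc => hk ?_⟩
  exact Finset.mem_image.mpr ⟨p, Finset.mem_filter.mpr ⟨hp, ht⟩, hc⟩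

lemma edge_unique {A : Finset (V × V)} {col : V × V → Fin n} (hprop : EProper A col)
    {p q : V × V} (hp : p ∈ A) (hq : q ∈ A) {v : V} (htp : EVtouch p v) (htq : EVtouch q v)
    (hc : col p = col q) : p = q := by
  by_contra hne
  exact hprop p hp q hq hne (EVshare_iff.mpr ⟨v, htp, htq⟩) hc

end VizingBasics


section Traj

variable {V : Type*}

/-- alternating trajectory of two involutions, starting with `g` -/
def traj (f g : V → V) (x : V) : ℕ → V
  | 0 => x
  | n + 1 => (if n % 2 = 0 then g else f) (traj f g x n)

variable {f g : V → V} {x : V}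

lemma traj_succ (n : ℕ) : traj f g x (n+1) = (if n % 2 = 0 then g else f) (traj f g x n) := rfl

lemma traj_back (hf : Function.Involutive f) (hg : Function.Involutive g) (n : ℕ) :
    (if n % 2 = 0 then g else f) (traj f g x (n+1)) = traj f g x n := by
  rw [traj_succ]
  by_cases h : n % 2 = 0
  · simp [h, hg _]
  · simp [h, hf _]

lemma traj_closure (hf : Function.Involutive f) (hg : Function.Involutive g)
    (hx : f x = x) (n : ℕ) :
    f (traj f g x n) ∈ Set.range (traj f g x) ∧ g (traj f g x n) ∈ Set.range (traj f g x) := by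
  rcases n with - | m
  · constructor
    · exact ⟨0, by simp [traj, hx]⟩
    · exact ⟨1, by simp [traj]⟩
  · by_cases h : m % 2 = 0
    · -- step m used g ; next step (m+1) uses f
      constructor
      · refine ⟨m + 2, ?_⟩
        rw [traj_succ (m+1)]
        have : (m+1) % 2 = 1 := by omega
        simp [this]
      · refine ⟨m, ?_⟩
        have := traj_back (x := x) hf hg m
        simpa [h] using this.symm
    · constructor
      · refine ⟨m, ?_⟩
        have := traj_back (x := x) hf hg m
        simpa [h] using this.symm
      · refine ⟨m + 2, ?_⟩
        rw [traj_succ (m+1)]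
        have : (m+1) % 2 = 0 := by omega
        simp [this]

/-- mirror: if the trajectory stalls at `n`, it retraces its steps -/
lemma traj_mirror (hf : Function.Involutive f) (hg : Function.Involutive g)
    {n : ℕ} (hst : traj f g x (n+1) = traj f g x n) :
    ∀ m, m ≤ n → traj f g x (n+1+m) = traj f g x (n-m) := by
  intro m
  induction m with
  | zero => intro _; simpa using hst
  | succ m ih =>
    intro hm
    have hm' : m ≤ n := by omega
    have h1 : traj f g x (n+1+(m+1)) = (if (n+1+m) % 2 = 0 then g else f) (traj f g x (n-m)) := by
      rw [show n+1+(m+1) = (n+1+m)+1 by ring, traj_succ, ih hm']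
    have h2 : n - m = (n - (m+1)) + 1 := by omega
    have hpar : (n+1+m) % 2 = (n-(m+1)) % 2 := by omega
    rw [h1, h2, hpar, traj_back hf hg]

/-- given a g-fixed point in the range which is an even stall, and g x ≠ x,
the even-stall value is unique -/
lemma traj_stall_unique (hf : Function.Involutive f) (hg : Function.Involutive g)
    (hx : f x = x) (hgx : g x ≠ x)
    {a b : V} (ha : a ∈ Set.range (traj f g x)) (hb : b ∈ Set.range (traj f g x))
    (hax : a ≠ x) (hbx : b ≠ x) (hga : g a = a) (hgb : g b = b) : a = b := by
  -- step 1 : from membership + g-fixed, get an even stall index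
  have step1 : ∀ c : V, c ∈ Set.range (traj f g x) → g c = c →
      ∃ j, j % 2 = 0 ∧ traj f g x j = c ∧ traj f g x (j+1) = traj f g x j := by
    rintro c ⟨i, rfl⟩ hgc
    by_cases h : i % 2 = 0
    · exact ⟨i, h, rfl, by rw [traj_succ]; simp [h, hgc]⟩
    · -- i odd : previous index
      obtain ⟨m, rfl⟩ : ∃ m, i = m + 1 := ⟨i - 1, by omega⟩
      have hm : m % 2 = 0 := by omega
      have hback : g (traj f g x (m+1)) = traj f g x m := by
        have := traj_back (x := x) hf hg m
        simpa [hm] using this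
      have hprev : traj f g x m = traj f g x (m+1) := hback.symm.trans hgc
      refine ⟨m, hm, hprev, ?_⟩
      exact hprev.symm
  classical
  obtain ⟨ja, hja0, hjac, hjas⟩ := step1 a ha hga
  have hex : ∃ j, j % 2 = 0 ∧ traj f g x (j+1) = traj f g x j := ⟨ja, hja0, hjas⟩
  set N := Nat.find hex with hN
  obtain ⟨hN0, hNs⟩ := Nat.find_spec hex
  have hNmin : ∀ j, j < N → ¬ (j % 2 = 0 ∧ traj f g x (j+1) = traj f g x j) :=
    fun j hj => Nat.find_min hex hj
  -- traj N ≠ x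
  have hNx : traj f g x N ≠ x := by
    intro h
    have : g (traj f g x N) = traj f g x N := by
      have := hNs
      rw [traj_succ, hN0] at this
      simpa using this
    rw [h] at this; exact hgx this
  have mir := traj_mirror (x := x) hf hg hNs
  -- traj (2N+1) = x
  have h2N1 : traj f g x (2*N+1) = x := by
    have := mir N le_rfl
    rw [show N+1+N = 2*N+1 by ring] at this
    rw [Nat.sub_self] at this; exact this
  -- traj (2N+2) = x
  have h2N2 : traj f g x (2*N+2) = x := by
    rw [show 2*N+2 = (2*N+1)+1 by ring, traj_succ]
    have : (2*N+1) % 2 = 1 := by omega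
    rw [this]; simp [h2N1, hx]
  -- periodicity
  have hper : ∀ k, traj f g x (k + (2*N+2)) = traj f g x k := by
    intro k
    induction k with
    | zero => rw [Nat.zero_add]; exact h2N2
    | succ k ih =>
      rw [show k+1+(2*N+2) = (k+(2*N+2))+1 by ring, traj_succ, traj_succ]
      have : (k+(2*N+2)) % 2 = k % 2 := by omega
      rw [this, ih]
  have hperq : ∀ q k, traj f g x (k + q * (2*N+2)) = traj f g x k := by
    intro q
    induction q with
    | zero => simp
    | succ q ih =>
      intro k
      rw [show k + (q+1)*(2*N+2) = (k + q*(2*N+2)) + (2*N+2) by ring, hper, ih]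
  -- main claim : any even stall with value ≠ x has value traj N
  have main : ∀ c : V, c ≠ x → (∃ j, j % 2 = 0 ∧ traj f g x j = c ∧ traj f g x (j+1) = traj f g x j) →
      c = traj f g x N := by
    rintro c hcx ⟨j, hj0, hjc, hjs⟩
    set m := j % (2*N+2) with hm
    have hmlt : m < 2*N+2 := Nat.mod_lt _ (by omega)
    obtain ⟨q, hq⟩ : ∃ q, j = m + q * (2*N+2) := ⟨j / (2*N+2), by
      rw [hm]; rw [Nat.mod_add_div']⟩
    obtain ⟨t, ht⟩ : ∃ t, j = m + 2 * t := ⟨q * (N+1), by rw [hq]; ring⟩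
    have hm0 : m % 2 = 0 := by omega
    have hmc : traj f g x m = c := by rw [← hjc, hq, hperq]
    have hms : traj f g x (m+1) = traj f g x m := by
      have h1 : traj f g x (j+1) = traj f g x (m+1) := by
        rw [hq, show m + q*(2*N+2) + 1 = (m+1) + q*(2*N+2) by ring, hperq]
      rw [← h1, hjs, hq, hperq]
    -- m is an even stall < 2N+2
    rcases le_or_gt m N with hle | hgt
    · rcases lt_or_eq_of_le hle with hlt | he
      · exact absurd ⟨hm0, hms⟩ (hNmin m hlt)
      · rw [← hmc, he]
    · -- N < m ≤ 2N : use mirror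
      have hmle : m ≤ 2*N := by omega
      have hm' : m - N - 1 ≤ N := by omega
      have hmir := mir (m - N - 1) hm'
      have : traj f g x m = traj f g x (2*N+1-m) := by
        rw [show N+1+(m-N-1) = m by omega] at hmir
        rw [hmir, show N-(m-N-1) = 2*N+1-m by omega]
      have hcj' : traj f g x (2*N+1-m) = c := by rw [← this, hmc]
      have hgc : g c = c := by
        rw [← hmc]
        have h5 := hms
        rw [traj_succ, hm0] at h5
        simpa using h5
      -- previous index is an even stall
      obtain ⟨m', hm'eq⟩ : ∃ m', 2*N+1-m = m' + 1 := ⟨2*N-m, by omega⟩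
      have hm'0 : m' % 2 = 0 := by omega
      have hcj'' : traj f g x (m'+1) = c := by rw [← hm'eq]; exact hcj'
      have hback : g (traj f g x (m'+1)) = traj f g x m' := by
        have := traj_back (x := x) hf hg m'
        simpa [hm'0] using this
      have hprev : traj f g x m' = traj f g x (m'+1) := by
        rw [← hback, hcj'', hgc, ← hcj'']
      have hlt : m' < N := by omega
      exact absurd ⟨hm'0, hprev.symm⟩ (hNmin m' hlt)
  have h1 := main a hax ⟨ja, hja0, hjac, hjas⟩
  obtain ⟨jb, hjb0, hjbc, hjbs⟩ := step1 b hb hgb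
  have h2 := main b hbx ⟨jb, hjb0, hjbc, hjbs⟩
  rw [h1, h2]

end Traj

section Mate

variable {V : Type*} [DecidableEq V] {n : ℕ}
set_option linter.unusedSectionVars false

/-- the other endpoint of an edge -/
def eother (p : V × V) (v : V) : V := if p.1 = v then p.2 else p.1

lemma eother_ne {p : V × V} {v : V} (hirr : p.1 ≠ p.2) (ht : EVtouch p v) : eother p v ≠ v := by
  unfold eother; rcases ht with h | h
  · rw [if_pos h]; rw [h] at hirr; exact hirr.symm
  · have h1 : p.1 ≠ v := fun hh => by rw [hh, ← h] at hirr; exact hirr rfl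
    rw [if_neg h1]; intro h2; rw [h2, ← h] at hirr; exact hirr rfl

lemma eother_touch {p : V × V} {v : V} (ht : EVtouch p v) : EVtouch p (eother p v) := by
  unfold eother EVtouch
  by_cases h : p.1 = v
  · rw [if_pos h]; right; rfl
  · rw [if_neg h]; left; rfl

lemma eother_eother {p : V × V} {v : V} (hirr : p.1 ≠ p.2) (ht : EVtouch p v) :
    eother p (eother p v) = v := by
  unfold eother
  by_cases h : p.1 = v
  · rw [if_pos h, if_neg hirr]; exact h
  · have h2 : p.2 = v := by rcases ht with h1 | h1; exact absurd h1 h; exact h1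
    rw [if_neg h, if_pos rfl]; exact h2

open Classical in
/-- the partner of `v` under the matching of color `k` (or `v` itself) -/
noncomputable def mate (E' : Finset (V × V)) (col : V × V → Fin n) (k : Fin n) (v : V) : V :=
  if h : ∃ p, p ∈ E' ∧ EVtouch p v ∧ col p = k then eother (Classical.choose h) v else v

variable {E' : Finset (V × V)} {col : V × V → Fin n} {k : Fin n}

lemma mate_eq_self_of_free {v : V} (hfree : EFree E' col v k) : mate E' col k v = v := by
  unfold mate
  rw [dif_neg]
  rintro ⟨p, hp, ht, hc⟩
  exact hfree p hp ht hc

lemma mate_eq_eother (hprop : EProper E' col) {v : V} {p : V × V} (hp : p ∈ E')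
    (ht : EVtouch p v) (hc : col p = k) : mate E' col k v = eother p v := by
  unfold mate
  have h : ∃ q, q ∈ E' ∧ EVtouch q v ∧ col q = k := ⟨p, hp, ht, hc⟩
  rw [dif_pos h]
  obtain ⟨hq1, hq2, hq3⟩ := Classical.choose_spec h
  rw [edge_unique hprop hq1 hp hq2 ht (hq3.trans hc.symm)]

lemma free_of_mate_eq_self (hprop : EProper E' col) (hirr : ∀ p ∈ E', p.1 ≠ p.2) {v : V}
    (h : mate E' col k v = v) : EFree E' col v k := by
  intro p hp ht hc
  rw [mate_eq_eother hprop hp ht hc] at h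
  exact eother_ne (hirr p hp) ht h

lemma mate_invol (hprop : EProper E' col) (hirr : ∀ p ∈ E', p.1 ≠ p.2) :
    Function.Involutive (mate E' col k) := by
  intro v
  by_cases h : ∃ p, p ∈ E' ∧ EVtouch p v ∧ col p = k
  · obtain ⟨p, hp, ht, hc⟩ := h
    rw [mate_eq_eother hprop hp ht hc,
        mate_eq_eother hprop hp (eother_touch ht) hc,
        eother_eother (hirr p hp) ht]
  · have hfree : EFree E' col v k := fun p hp ht hc => h ⟨p, hp, ht, hc⟩
    rw [mate_eq_self_of_free hfree, mate_eq_self_of_free hfree]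

lemma mate_edge_touch (hprop : EProper E' col) {v : V} {p : V × V} (hp : p ∈ E')
    (ht : EVtouch p v) (hc : col p = k) : EVtouch p (mate E' col k v) := by
  rw [mate_eq_eother hprop hp ht hc]; exact eother_touch ht

lemma mate_ne_of_not_free (hprop : EProper E' col) (hirr : ∀ p ∈ E', p.1 ≠ p.2) {v : V}
    (h : ¬ EFree E' col v k) : mate E' col k v ≠ v := by
  intro he
  exact h (free_of_mate_eq_self hprop hirr he)

end Mate

section Fan

variable {V : Type*} [DecidableEq V] {n : ℕ}
set_option linter.unusedSectionVars false

def xedge (E' : Finset (V × V)) (x u : V) : V × V := if (x,u) ∈ E' then (x,u) else (u,x)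

lemma xedge_touch_x {E' : Finset (V × V)} {x u : V} : EVtouch (xedge E' x u) x := by
  unfold xedge EVtouch
  by_cases h : (x,u) ∈ E'
  · rw [if_pos h]; left; rfl
  · rw [if_neg h]; right; rfl

lemma xedge_touch_u {E' : Finset (V × V)} {x u : V} : EVtouch (xedge E' x u) u := by
  unfold xedge EVtouch
  by_cases h : (x,u) ∈ E'
  · rw [if_pos h]; right; rfl
  · rw [if_neg h]; left; rfl

lemma xedge_endpoints {E' : Finset (V × V)} {x u v : V} (h : EVtouch (xedge E' x u) v) :
    v = x ∨ v = u := by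
  unfold xedge EVtouch at h
  by_cases hc : (x,u) ∈ E'
  · rw [if_pos hc] at h; rcases h with h | h
    · exact Or.inl h.symm
    · exact Or.inr h.symm
  · rw [if_neg hc] at h; rcases h with h | h
    · exact Or.inr h.symm
    · exact Or.inl h.symm

lemma xedge_inj {E' : Finset (V × V)} {x u w : V} (hu : u ≠ x) (hw : w ≠ x)
    (h : xedge E' x u = xedge E' x w) : u = w := by
  unfold xedge at h
  by_cases h1 : (x,u) ∈ E' <;> by_cases h2 : (x,w) ∈ E' <;>
    simp only [if_pos, if_neg, h1, h2] at h
  · exact (Prod.mk.injEq _ _ _ _).mp h |>.2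
  · obtain ⟨ha, hb⟩ := (Prod.mk.injEq _ _ _ _).mp h
    exact absurd hb hu
  · obtain ⟨ha, hb⟩ := (Prod.mk.injEq _ _ _ _).mp h
    exact absurd ha hu
  · exact ((Prod.mk.injEq _ _ _ _).mp h).1

structure IsFan (E' : Finset (V × V)) (col : V × V → Fin n) (x y : V) (r : ℕ) (F : ℕ → V) :
    Prop where
  f0 : F 0 = y
  nex : ∀ i ≤ r, F i ≠ x
  inj : ∀ i ≤ r, ∀ j ≤ r, F i = F j → i = j
  mem : ∀ i, 1 ≤ i → i ≤ r → xedge E' x (F i) ∈ E'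
  freeCond : ∀ i, 1 ≤ i → i ≤ r → EFree E' col (F (i-1)) (col (xedge E' x (F i)))

def Fedge (E' : Finset (V × V)) (e : V × V) (F : ℕ → V) (i : ℕ) : V × V :=
  if i = 0 then e else xedge E' e.1 (F i)

variable {E' : Finset (V × V)} {col : V × V → Fin n} {e : V × V} {r : ℕ} {F : ℕ → V}

lemma Fedge_zero : Fedge E' e F 0 = e := if_pos rfl

lemma Fedge_mem_E' (hfan : IsFan E' col e.1 e.2 r F) {i : ℕ} (h1 : 1 ≤ i) (h2 : i ≤ r) :
    Fedge E' e F i ∈ E' := by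
  unfold Fedge; rw [if_neg (by omega)]; exact hfan.mem i h1 h2

lemma Fedge_mem_insert (hfan : IsFan E' col e.1 e.2 r F) {i : ℕ} (h2 : i ≤ r) :
    Fedge E' e F i ∈ insert e E' := by
  rcases Nat.eq_zero_or_pos i with h | h
  · rw [h, Fedge_zero]; exact Finset.mem_insert_self _ _
  · exact Finset.mem_insert_of_mem (Fedge_mem_E' hfan h h2)

lemma Fedge_inj (hfan : IsFan E' col e.1 e.2 r F) (he' : e ∉ E') {i j : ℕ}
    (hi : i ≤ r) (hj : j ≤ r) (h : Fedge E' e F i = Fedge E' e F j) : i = j := by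
  unfold Fedge at h
  rcases Nat.eq_zero_or_pos i with h0 | h0 <;> rcases Nat.eq_zero_or_pos j with h1 | h1
  · omega
  · rw [if_pos h0, if_neg (by omega)] at h
    exact absurd (h ▸ hfan.mem j h1 hj) he'
  · rw [if_neg (by omega), if_pos h1] at h
    exact absurd (h ▸ hfan.mem i h0 hi) he'
  · rw [if_neg (by omega), if_neg (by omega)] at h
    exact hfan.inj i hi j hj (xedge_inj (hfan.nex i hi) (hfan.nex j hj) h)

lemma Fedge_touch_x (hfan : IsFan E' col e.1 e.2 r F) {i : ℕ} :
    EVtouch (Fedge E' e F i) e.1 := by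
  unfold Fedge
  rcases Nat.eq_zero_or_pos i with h | h
  · rw [if_pos h]; left; rfl
  · rw [if_neg (by omega)]; exact xedge_touch_x

lemma Fedge_touch_Fi (hfan : IsFan E' col e.1 e.2 r F) {i : ℕ} (hi : i ≤ r) :
    EVtouch (Fedge E' e F i) (F i) := by
  unfold Fedge
  rcases Nat.eq_zero_or_pos i with h | h
  · rw [if_pos h, h, hfan.f0]; right; rfl
  · rw [if_neg (by omega)]; exact xedge_touch_u

lemma Fedge_endpoints (hfan : IsFan E' col e.1 e.2 r F) {i : ℕ} {v : V}
    (h : EVtouch (Fedge E' e F i) v) : v = e.1 ∨ v = F i := by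
  unfold Fedge at h
  rcases Nat.eq_zero_or_pos i with h0 | h0
  · rw [if_pos h0] at h
    rcases h with h | h
    · exact Or.inl h.symm
    · right; rw [h0, hfan.f0]; exact h.symm
  · rw [if_neg (by omega)] at h
    exact xedge_endpoints h

open Classical in
noncomputable def rotCol (E' : Finset (V × V)) (e : V × V) (F : ℕ → V) (r : ℕ) (β : Fin n)
    (col : V × V → Fin n) : V × V → Fin n := fun p =>
  if h : ∃ i, i ≤ r ∧ p = Fedge E' e F i then
    (if Nat.find h = r then β else col (Fedge E' e F (Nat.find h + 1)))
  else col p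

lemma rotCol_eval (hfan : IsFan E' col e.1 e.2 r F) (he' : e ∉ E') {β : Fin n} {j : ℕ}
    (hj : j ≤ r) :
    rotCol E' e F r β col (Fedge E' e F j) = if j = r then β else col (Fedge E' e F (j+1)) := by
  classical
  unfold rotCol
  have h : ∃ i, i ≤ r ∧ Fedge E' e F j = Fedge E' e F i := ⟨j, hj, rfl⟩
  rw [dif_pos h]
  have hspec := Nat.find_spec h
  have hfind : Nat.find h = j := Fedge_inj hfan he' hspec.1 hj hspec.2.symm
  rw [hfind]

lemma rotCol_nonfan {β : Fin n} {p : V × V} (h : ¬ ∃ i, i ≤ r ∧ p = Fedge E' e F i) :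
    rotCol E' e F r β col p = col p := by
  classical
  unfold rotCol
  rw [dif_neg]
  intro hc
  exact h hc

lemma rot_proper (he' : e ∉ E') (hprop : EProper E' col)
    (hfan : IsFan E' col e.1 e.2 r F) {β : Fin n}
    (hβx : EFree E' col e.1 β) (hβr : EFree E' col (F r) β) :
    EProper (insert e E') (rotCol E' e F r β col) := by
  classical
  have hnonfan : ∀ z ∈ insert e E', (¬ ∃ i, i ≤ r ∧ z = Fedge E' e F i) → z ∈ E' := by
    intro z hz hnz
    rcases Finset.mem_insert.mp hz with h | h
    · exact absurd ⟨0, Nat.zero_le _, by rw [h, Fedge_zero]⟩ hnz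
    · exact h
  -- asymmetric key : p is a fan edge, q is not
  have key : ∀ p q : V × V, q ∈ insert e E' → p ≠ q → EVshare p q →
      (∃ i, i ≤ r ∧ p = Fedge E' e F i) → (¬ ∃ i, i ≤ r ∧ q = Fedge E' e F i) →
      rotCol E' e F r β col p ≠ rotCol E' e F r β col q := by
    rintro p q hq hne hsh ⟨i, hi, rfl⟩ hqn
    have hq' : q ∈ E' := hnonfan q hq hqn
    rw [rotCol_eval hfan he' hi, rotCol_nonfan hqn]
    obtain ⟨v, htp, htq⟩ := EVshare_iff.mp hsh
    rcases Fedge_endpoints hfan htp with hv | hv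
    · -- shared vertex is x
      subst hv
      by_cases hir : i = r
      · rw [if_pos hir]
        exact fun hc => hβx q hq' htq hc.symm
      · rw [if_neg hir]
        have h1 : Fedge E' e F (i+1) ∈ E' := Fedge_mem_E' hfan (by omega) (by omega)
        have h2 : Fedge E' e F (i+1) ≠ q := by
          intro hc
          exact hqn ⟨i+1, by omega, hc.symm⟩
        exact hprop _ h1 q hq' h2 (EVshare_iff.mpr ⟨e.1, Fedge_touch_x hfan, htq⟩)
    · -- shared vertex is F i
      subst hv
      by_cases hir : i = r
      · rw [if_pos hir]
        subst hir
        exact fun hc => hβr q hq' htq hc.symm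
      · rw [if_neg hir]
        have hfree := hfan.freeCond (i+1) (by omega) (by omega)
        simp only [Nat.add_sub_cancel] at hfree
        have : col (xedge E' e.1 (F (i+1))) = col (Fedge E' e F (i+1)) := by
          unfold Fedge; rw [if_neg (by omega)]
        rw [this] at hfree
        exact fun hc => hfree q hq' htq hc.symm
  intro p hp q hq hne hsh
  by_cases hpf : ∃ i, i ≤ r ∧ p = Fedge E' e F i <;>
    by_cases hqf : ∃ i, i ≤ r ∧ q = Fedge E' e F i
  · -- both fan edges
    obtain ⟨i, hi, rfl⟩ := hpf
    obtain ⟨j, hj, rfl⟩ := hqf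
    have hij : i ≠ j := fun hc => hne (by rw [hc])
    rw [rotCol_eval hfan he' hi, rotCol_eval hfan he' hj]
    by_cases hir : i = r <;> by_cases hjr : j = r
    · omega
    · rw [if_pos hir, if_neg hjr]
      have h1 : Fedge E' e F (j+1) ∈ E' := Fedge_mem_E' hfan (by omega) (by omega)
      exact fun hc => hβx _ h1 (Fedge_touch_x hfan) hc.symm
    · rw [if_neg hir, if_pos hjr]
      have h1 : Fedge E' e F (i+1) ∈ E' := Fedge_mem_E' hfan (by omega) (by omega)
      exact fun hc => hβx _ h1 (Fedge_touch_x hfan) hc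
    · rw [if_neg hir, if_neg hjr]
      have h1 : Fedge E' e F (i+1) ∈ E' := Fedge_mem_E' hfan (by omega) (by omega)
      have h2 : Fedge E' e F (j+1) ∈ E' := Fedge_mem_E' hfan (by omega) (by omega)
      have h3 : Fedge E' e F (i+1) ≠ Fedge E' e F (j+1) := by
        intro hc
        have := Fedge_inj hfan he' (by omega : i+1 ≤ r) (by omega : j+1 ≤ r) hc
        omega
      exact hprop _ h1 _ h2 h3
        (EVshare_iff.mpr ⟨e.1, Fedge_touch_x hfan, Fedge_touch_x hfan⟩)
  · exact key p q hq hne hsh hpf hqf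
  · exact (key q p hp (Ne.symm hne) (EVshare_symm hsh) hqf hpf).symm
  · rw [rotCol_nonfan hpf, rotCol_nonfan hqf]
    exact hprop p (hnonfan p hp hpf) q (hnonfan q hq hqf) hne hsh

end Fan

section FanExists

variable {V : Type*} [Fintype V] [DecidableEq V] {n : ℕ}
set_option linter.unusedSectionVars false

lemma fan_card_bound {E' : Finset (V × V)} {col : V × V → Fin n} {x y : V} {r : ℕ} {F : ℕ → V}
    (hfan : IsFan E' col x y r F) : r + 1 ≤ Fintype.card V := by
  have hinj : Function.Injective (fun i : Fin (r+1) => F i.1) := by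
    intro i j hij
    exact Fin.ext (hfan.inj i.1 (by omega) j.1 (by omega) hij)
  have h2 := Fintype.card_le_of_injective _ hinj
  simpa using h2

lemma fan_extend {E' : Finset (V × V)} {col : V × V → Fin n} {x y : V} {r : ℕ} {F : ℕ → V}
    (hfan : IsFan E' col x y r F) {u : V} (hu1 : xedge E' x u ∈ E') (hu2 : u ≠ x)
    (hu3 : ∀ i ≤ r, F i ≠ u) (hu4 : EFree E' col (F r) (col (xedge E' x u))) :
    IsFan E' col x y (r+1) (Function.update F (r+1) u) := by
  constructor
  · rw [Function.update_of_ne (by omega)]; exact hfan.f0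
  · intro i hi
    rcases Nat.lt_or_ge i (r+1) with h | h
    · rw [Function.update_of_ne (by omega)]; exact hfan.nex i (by omega)
    · have : i = r+1 := by omega
      rw [this, Function.update_self]; exact hu2
  · intro i hi j hj hij
    rcases Nat.lt_or_ge i (r+1) with h1 | h1 <;> rcases Nat.lt_or_ge j (r+1) with h2 | h2
    · rw [Function.update_of_ne (by omega), Function.update_of_ne (by omega)] at hij
      exact hfan.inj i (by omega) j (by omega) hij
    · have hj' : j = r+1 := by omega
      rw [Function.update_of_ne (by omega), hj', Function.update_self] at hij
      exact absurd hij (hu3 i (by omega))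
    · have hi' : i = r+1 := by omega
      rw [hi', Function.update_self, Function.update_of_ne (by omega)] at hij
      exact absurd hij.symm (hu3 j (by omega))
    · omega
  · intro i h1 h2
    rcases Nat.lt_or_ge i (r+1) with h | h
    · rw [Function.update_of_ne (by omega)]; exact hfan.mem i h1 (by omega)
    · have : i = r+1 := by omega
      rw [this, Function.update_self]; exact hu1
  · intro i h1 h2
    rcases Nat.lt_or_ge i (r+1) with h | h
    · rw [Function.update_of_ne (by omega), Function.update_of_ne (by omega)]
      exact hfan.freeCond i h1 (by omega)
    · have hir : i = r+1 := by omega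
      subst hir
      rw [Function.update_self, Function.update_of_ne (by omega)]
      simpa using hu4
  
lemma exists_max_fan (E' : Finset (V × V)) (col : V × V → Fin n) (x y : V) (hyx : y ≠ x) :
    ∃ r F, IsFan E' col x y r F ∧
      ∀ u, xedge E' x u ∈ E' → u ≠ x → (∀ i ≤ r, F i ≠ u) →
        ¬ EFree E' col (F r) (col (xedge E' x u)) := by
  classical
  have main : ∀ m r F, IsFan E' col x y r F → Fintype.card V ≤ r + 1 + m →
      ∃ r' F', IsFan E' col x y r' F' ∧
      ∀ u, xedge E' x u ∈ E' → u ≠ x → (∀ i ≤ r', F' i ≠ u) →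
        ¬ EFree E' col (F' r') (col (xedge E' x u)) := by
    intro m
    induction m with
    | zero =>
      intro r F hfan hcard
      refine ⟨r, F, hfan, ?_⟩
      intro u hu1 hu2 hu3 hu4
      have hext := fan_extend hfan hu1 hu2 hu3 hu4
      have := fan_card_bound hext
      omega
    | succ m ih =>
      intro r F hfan hcard
      by_cases hmax : ∀ u, xedge E' x u ∈ E' → u ≠ x → (∀ i ≤ r, F i ≠ u) →
          ¬ EFree E' col (F r) (col (xedge E' x u))
      · exact ⟨r, F, hfan, hmax⟩
      · push_neg at hmax
        obtain ⟨u, hu1, hu2, hu3, hu4⟩ := hmax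
        exact ih (r+1) _ (fan_extend hfan hu1 hu2 hu3 hu4) (by omega)
  have hbase : IsFan E' col x y 0 (fun _ => y) := by
    constructor
    · rfl
    · intro i _; exact hyx
    · intro i hi j hj _; omega
    · intro i h1 h2; omega
    · intro i h1 h2; omega
  exact main (Fintype.card V) 0 (fun _ => y) hbase (by omega)

end FanExists

section Invert

variable {V : Type*} [DecidableEq V] {n : ℕ}
set_option linter.unusedSectionVars false

open Classical in
noncomputable def invCol (E' : Finset (V × V)) (col : V × V → Fin n) (c dd : Fin n)
    (S : Set V) : V × V → Fin n := fun p =>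
  if p ∈ E' ∧ p.1 ∈ S ∧ (col p = c ∨ col p = dd) then (if col p = c then dd else c) else col p

variable {E' : Finset (V × V)} {col : V × V → Fin n} {c dd : Fin n} {S : Set V}

lemma invCol_touched {p : V × V} (h : p ∈ E' ∧ p.1 ∈ S ∧ (col p = c ∨ col p = dd)) :
    invCol E' col c dd S p = if col p = c then dd else c := by
  classical
  unfold invCol
  rw [if_pos h]

lemma invCol_untouched {p : V × V} (h : ¬ (p ∈ E' ∧ p.1 ∈ S ∧ (col p = c ∨ col p = dd))) :
    invCol E' col c dd S p = col p := by
  classical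
  unfold invCol
  rw [if_neg h]

variable (hcd : c ≠ dd)
  (hcross : ∀ p ∈ E', (col p = c ∨ col p = dd) → (p.1 ∈ S ↔ p.2 ∈ S))

include hcross in
lemma cross_touch {p : V × V} {v : V} (hp : p ∈ E') (ht : EVtouch p v)
    (hcol : col p = c ∨ col p = dd) (hv : v ∈ S) : p.1 ∈ S := by
  rcases ht with h | h
  · rwa [h]
  · exact (hcross p hp hcol).mpr (h ▸ hv)

include hcd hcross in
lemma invCol_proper (hprop : EProper E' col) : EProper E' (invCol E' col c dd S) := by
  classical
  have key : ∀ p q : V × V, p ∈ E' → q ∈ E' → p ≠ q → EVshare p q →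
      (p.1 ∈ S ∧ (col p = c ∨ col p = dd)) → ¬ (q.1 ∈ S ∧ (col q = c ∨ col q = dd)) →
      invCol E' col c dd S p ≠ invCol E' col c dd S q := by
    intro p q hp hq hne hsh htp htq
    rw [invCol_touched ⟨hp, htp.1, htp.2⟩, invCol_untouched (fun h => htq ⟨h.2.1, h.2.2⟩)]
    intro hval
    apply htq
    have hqval : col q = c ∨ col q = dd := by
      by_cases h : col p = c
      · rw [if_pos h] at hval; exact Or.inr hval.symm
      · rw [if_neg h] at hval; exact Or.inl hval.symm
    refine ⟨?_, hqval⟩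
    obtain ⟨v, htpv, htqv⟩ := EVshare_iff.mp hsh
    have hvS : v ∈ S := by
      rcases htpv with h | h
      · rw [← h]; exact htp.1
      · rw [← h]; exact (hcross p hp htp.2).mp htp.1
    exact cross_touch hcross hq htqv hqval hvS
  intro p hp q hq hne hsh
  by_cases htp : p.1 ∈ S ∧ (col p = c ∨ col p = dd) <;>
    by_cases htq : q.1 ∈ S ∧ (col q = c ∨ col q = dd)
  · rw [invCol_touched ⟨hp, htp.1, htp.2⟩, invCol_touched ⟨hq, htq.1, htq.2⟩]
    intro hval
    have : col p = col q := by
      rcases htp.2 with h1 | h1 <;> rcases htq.2 with h2 | h2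
      · rw [h1, h2]
      · rw [if_pos h1, if_neg (by rw [h2]; exact (Ne.symm hcd))] at hval
        exact absurd hval.symm hcd
      · rw [if_neg (by rw [h1]; exact (Ne.symm hcd)), if_pos h2] at hval
        exact absurd hval hcd
      · rw [h1, h2]
    exact hprop p hp q hq hne hsh this
  · exact key p q hp hq hne hsh htp htq
  · exact (key q p hq hp (Ne.symm hne) (EVshare_symm hsh) htq htp).symm
  · rw [invCol_untouched (fun h => htp ⟨h.2.1, h.2.2⟩),
        invCol_untouched (fun h => htq ⟨h.2.1, h.2.2⟩)]
    exact hprop p hp q hq hne hsh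

include hcd in
lemma invCol_val_iff {γ : Fin n} (hγc : γ ≠ c) (hγd : γ ≠ dd) {p : V × V} :
    invCol E' col c dd S p = γ ↔ col p = γ := by
  classical
  by_cases h : p ∈ E' ∧ p.1 ∈ S ∧ (col p = c ∨ col p = dd)
  · rw [invCol_touched h]
    constructor
    · intro hv
      by_cases hc : col p = c
      · rw [if_pos hc] at hv; exact absurd hv.symm hγd
      · rw [if_neg hc] at hv; exact absurd hv.symm hγc
    · intro hv
      rcases h.2.2 with h1 | h1
      · exact absurd (hv ▸ h1 : γ = c) hγc
      · exact absurd (hv ▸ h1 : γ = dd) hγd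
  · rw [invCol_untouched h]

include hcd in
lemma invCol_free_iff {γ : Fin n} (hγc : γ ≠ c) (hγd : γ ≠ dd) {v : V} :
    EFree E' (invCol E' col c dd S) v γ ↔ EFree E' col v γ := by
  unfold EFree
  constructor
  · intro h p hp ht hval
    exact h p hp ht ((invCol_val_iff hcd hγc hγd).mpr hval)
  · intro h p hp ht hval
    exact h p hp ht ((invCol_val_iff hcd hγc hγd).mp hval)

include hcd hcross in
lemma invCol_free_dd_at {v : V} (hv : v ∈ S) (hvc : EFree E' col v c) :
    EFree E' (invCol E' col c dd S) v dd := by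
  intro p hp ht hval
  by_cases h : p ∈ E' ∧ p.1 ∈ S ∧ (col p = c ∨ col p = dd)
  · rw [invCol_touched h] at hval
    by_cases hc : col p = c
    · exact hvc p hp ht hc
    · rw [if_neg hc] at hval; exact hcd hval.symm.symm
  · rw [invCol_untouched h] at hval
    exact h ⟨hp, cross_touch hcross hp ht (Or.inr hval) hv, Or.inr hval⟩

include hcd hcross in
lemma invCol_dd_newly_used {v : V} (hbefore : EFree E' col v dd)
    (hafter : ¬ EFree E' (invCol E' col c dd S) v dd) :
    v ∈ S ∧ ¬ EFree E' col v c := by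
  classical
  unfold EFree at hafter
  push_neg at hafter
  obtain ⟨q, hq, htq, hval⟩ := hafter
  by_cases h : q ∈ E' ∧ q.1 ∈ S ∧ (col q = c ∨ col q = dd)
  · rw [invCol_touched h] at hval
    by_cases hc : col q = c
    · -- q is the c-edge at v, inside S
      have hv : v ∈ S := by
        rcases htq with h1 | h1
        · rw [← h1]; exact h.2.1
        · rw [← h1]; exact (hcross q hq h.2.2).mp h.2.1
      exact ⟨hv, fun hfree => hfree q hq htq hc⟩
    · rw [if_neg hc] at hval
      exact absurd hval.symm hcd.symm
  · rw [invCol_untouched h] at hval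
    exact absurd hval (hbefore q hq htq)

include hcd hcross in
lemma invCol_free_c_at {v : V} (hv : v ∈ S) (hvd : EFree E' col v dd) :
    EFree E' (invCol E' col c dd S) v c := by
  intro p hp ht hval
  by_cases h : p ∈ E' ∧ p.1 ∈ S ∧ (col p = c ∨ col p = dd)
  · rw [invCol_touched h] at hval
    by_cases hc : col p = c
    · rw [if_pos hc] at hval; exact hcd hval.symm
    · rcases h.2.2 with h1 | h1
      · exact hc h1
      · exact hvd p hp ht h1
  · rw [invCol_untouched h] at hval
    exact h ⟨hp, cross_touch hcross hp ht (Or.inl hval) hv, Or.inl hval⟩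

end Invert

section Extend

variable {V : Type*} [Fintype V] [DecidableEq V] {d : ℕ}
set_option linter.unusedSectionVars false

lemma extend_coloring (A : Finset (V × V)) (hirr : ∀ p ∈ A, p.1 ≠ p.2)
    (honce : ∀ p ∈ A, (p.2, p.1) ∉ A)
    (hdeg : ∀ v, (A.filter (fun p => EVtouch p v)).card ≤ d)
    (e : V × V) (he : e ∈ A) (col : V × V → Fin (d+1))
    (hprop : EProper (A.erase e) col) :
    ∃ col2 : V × V → Fin (d+1), EProper A col2 := by
  classical
  set E' := A.erase e with hE'
  have hsub : E' ⊆ A := Finset.erase_subset e A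
  have hirr' : ∀ p ∈ E', p.1 ≠ p.2 := fun p hp => hirr p (hsub hp)
  have he' : e ∉ E' := Finset.notMem_erase e A
  have hins : insert e E' = A := Finset.insert_erase he
  have hyx : e.2 ≠ e.1 := (hirr e he).symm
  have hdeg' : ∀ v, (E'.filter (fun p => EVtouch p v)).card < d + 1 := by
    intro v
    have h1 : (E'.filter (fun p => EVtouch p v)).card ≤ (A.filter (fun p => EVtouch p v)).card :=
      Finset.card_le_card (Finset.filter_subset_filter _ hsub)
    have := hdeg v
    omega
  obtain ⟨r, F, hfan, hmax⟩ := exists_max_fan E' col e.1 e.2 hyx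
  obtain ⟨c, hc⟩ := exists_free (hdeg' e.1)
  obtain ⟨dd, hdd⟩ := exists_free (hdeg' (F r))
  by_cases hddx : EFree E' col e.1 dd
  · -- Case 0 : dd free at both x and F r : rotate the full fan
    exact ⟨rotCol E' e F r dd col, hins ▸ rot_proper he' hprop hfan hddx hdd⟩
  · have hcd : c ≠ dd := fun h => hddx (h ▸ hc)
    -- the x-edge colored dd
    obtain ⟨p₀, hp₀, ht₀, hcol₀⟩ : ∃ p, p ∈ E' ∧ EVtouch p e.1 ∧ col p = dd := by
      unfold EFree at hddx
      push_neg at hddx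
      obtain ⟨p, hp, ht, hv⟩ := hddx
      exact ⟨p, hp, ht, hv⟩
    set u := eother p₀ e.1 with hu
    have hu_ne : u ≠ e.1 := eother_ne (hirr' p₀ hp₀) ht₀
    have hxedge_eq : xedge E' e.1 u = p₀ := by
      by_cases h1 : p₀.1 = e.1
      · have hu2 : u = p₀.2 := by rw [hu]; unfold eother; rw [if_pos h1]
        have hp₀eq : p₀ = (e.1, u) := by rw [hu2, ← h1]
        unfold xedge
        rw [if_pos (hp₀eq ▸ hp₀), hp₀eq]
      · have h2 : p₀.2 = e.1 := by rcases ht₀ with h | h; exact absurd h h1; exact h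
        have hu2 : u = p₀.1 := by rw [hu]; unfold eother; rw [if_neg h1]
        have hp₀eq : p₀ = (u, e.1) := by rw [hu2, ← h2]
        unfold xedge
        rw [if_neg, hp₀eq]
        intro hmem
        exact honce (e.1, u) (hsub hmem) (by rw [← hp₀eq]; exact hsub hp₀)
    have hxedge_mem : xedge E' e.1 u ∈ E' := by rw [hxedge_eq]; exact hp₀
    have hcolu : col (xedge E' e.1 u) = dd := by rw [hxedge_eq]; exact hcol₀
    -- by maximality, u is a fan vertex
    obtain ⟨jj, hjjr, hFjj⟩ : ∃ jj, jj ≤ r ∧ F jj = u := by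
      by_contra hcon
      push_neg at hcon
      have : ∀ i ≤ r, F i ≠ u := fun i hi => hcon i hi
      exact hmax u hxedge_mem hu_ne this (hcolu ▸ hdd)
    have hjj1 : 1 ≤ jj := by
      rcases Nat.eq_zero_or_pos jj with h0 | h0
      · exfalso
        have hyu : u = e.2 := by rw [← hFjj, h0, hfan.f0]
        have htu : EVtouch p₀ u := by rw [← hxedge_eq]; exact xedge_touch_u
        by_cases h1 : p₀.1 = e.1
        · have h2 : p₀.2 = u := by
            rcases htu with h | h
            · exact absurd (h1.symm.trans h) (Ne.symm hu_ne)
            · exact h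
          have hpe : p₀ = e := Prod.ext h1 (h2.trans hyu)
          exact he' (hpe ▸ hp₀)
        · have h2 : p₀.2 = e.1 := by rcases ht₀ with h | h; exact absurd h h1; exact h
          have h3 : p₀.1 = u := by
            rcases htu with h | h
            · exact h
            · exact absurd (h.symm.trans h2) hu_ne
          have hpe : p₀ = (e.2, e.1) := Prod.ext (h3.trans hyu) h2
          exact honce e he (hpe ▸ hsub hp₀)
      · exact h0
    have hjjlt : jj - 1 < r := by omega
    -- dd is free at F (jj-1) for the original coloring
    have hddfree_prev : EFree E' col (F (jj-1)) dd := by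
      have hfc := hfan.freeCond jj hjj1 hjjr
      rwa [hFjj, hcolu] at hfc
    -- the Kempe chain
    set f := mate E' col c with hf
    set g := mate E' col dd with hg
    have hfinv : Function.Involutive f := mate_invol hprop hirr'
    have hginv : Function.Involutive g := mate_invol hprop hirr'
    have hfx : f e.1 = e.1 := mate_eq_self_of_free hc
    have hgx : g e.1 ≠ e.1 := mate_ne_of_not_free hprop hirr' hddx
    set S : Set V := Set.range (traj f g e.1) with hS
    have hxS : e.1 ∈ S := ⟨0, rfl⟩
    have hSf : ∀ a ∈ S, f a ∈ S := by
      rintro a ⟨i, rfl⟩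
      exact (traj_closure hfinv hginv hfx i).1
    have hSg : ∀ a ∈ S, g a ∈ S := by
      rintro a ⟨i, rfl⟩
      exact (traj_closure hfinv hginv hfx i).2
    have hcross : ∀ p ∈ E', (col p = c ∨ col p = dd) → (p.1 ∈ S ↔ p.2 ∈ S) := by
      intro p hp hcol
      have hmate : ∀ k : Fin (d+1), col p = k →
          mate E' col k p.1 = p.2 ∧ mate E' col k p.2 = p.1 := by
        intro k hk
        constructor
        · rw [mate_eq_eother hprop hp (Or.inl rfl) hk]
          unfold eother; rw [if_pos rfl]
        · rw [mate_eq_eother hprop hp (Or.inr rfl) hk]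
          unfold eother; rw [if_neg (hirr' p hp)]
      rcases hcol with h | h
      · obtain ⟨h1, h2⟩ := hmate c h
        constructor
        · intro hs; rw [← h1]; exact hSf _ hs
        · intro hs; rw [← h2]; exact hSf _ hs
      · obtain ⟨h1, h2⟩ := hmate dd h
        constructor
        · intro hs; rw [← h1]; exact hSg _ hs
        · intro hs; rw [← h2]; exact hSg _ hs
    set col' := invCol E' col c dd S with hcol'
    have hprop' : EProper E' col' := invCol_proper hcd hcross hprop
    have hddx' : EFree E' col' e.1 dd := invCol_free_dd_at hcd hcross hxS hc
    -- colors of fan edges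
    have hγc : ∀ i, 1 ≤ i → i ≤ r → col (Fedge E' e F i) ≠ c := fun i h1 h2 hcc =>
      hc _ (Fedge_mem_E' hfan h1 h2) (Fedge_touch_x hfan) hcc
    have hFedge_jj : Fedge E' e F jj = p₀ := by
      unfold Fedge
      rw [if_neg (by omega), hFjj]
      exact hxedge_eq
    have hγd : ∀ i, 1 ≤ i → i ≤ r → i ≠ jj → col (Fedge E' e F i) ≠ dd := by
      intro i h1 h2 hne hcc
      have heq : Fedge E' e F i = p₀ :=
        edge_unique hprop (Fedge_mem_E' hfan h1 h2) hp₀ (Fedge_touch_x hfan) ht₀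
          (hcc.trans hcol₀.symm)
      have : Fedge E' e F i = Fedge E' e F jj := heq.trans hFedge_jj.symm
      exact hne (Fedge_inj hfan he' h2 hjjr this)
    have hcol'_fan : ∀ i, 1 ≤ i → i ≤ r → i ≠ jj →
        col' (Fedge E' e F i) = col (Fedge E' e F i) := by
      intro i h1 h2 hne
      apply invCol_untouched
      rintro ⟨-, -, (h | h)⟩
      · exact hγc i h1 h2 h
      · exact hγd i h1 h2 hne h
    have hxedge_Fedge : ∀ i, 1 ≤ i → xedge E' e.1 (F i) = Fedge E' e F i := by
      intro i h1
      unfold Fedge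
      rw [if_neg (by omega)]
    by_cases hcaseA : EFree E' col' (F (jj-1)) dd
    · -- Case A : rotate the prefix fan [0..jj-1] with β = dd under col'
      have hfanA : IsFan E' col' e.1 e.2 (jj-1) F := by
        constructor
        · exact hfan.f0
        · intro i hi; exact hfan.nex i (by omega)
        · intro i hi j hj hij; exact hfan.inj i (by omega) j (by omega) hij
        · intro i h1 h2; exact hfan.mem i h1 (by omega)
        · intro i h1 h2
          have hine : i ≠ jj := by omega
          rw [hxedge_Fedge i h1, hcol'_fan i h1 (by omega) hine]
          rw [invCol_free_iff hcd (hγc i h1 (by omega)) (hγd i h1 (by omega) hine)]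
          have := hfan.freeCond i h1 (by omega)
          rwa [hxedge_Fedge i h1] at this
      exact ⟨rotCol E' e F (jj-1) dd col', hins ▸ rot_proper he' hprop' hfanA hddx' hcaseA⟩
    · -- Case B : rotate the full fan with β = dd under col'
      obtain ⟨hprevS, hprevC⟩ := invCol_dd_newly_used hcd hcross hddfree_prev hcaseA
      have hddr' : EFree E' col' (F r) dd := by
        by_contra hbad
        obtain ⟨hrS, hrC⟩ := invCol_dd_newly_used hcd hcross hdd hbad
        have h1 : g (F (jj-1)) = F (jj-1) := mate_eq_self_of_free hddfree_prev
        have h2 : g (F r) = F r := mate_eq_self_of_free hdd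
        have h3 : F (jj-1) ≠ e.1 := hfan.nex (jj-1) (by omega)
        have h4 : F r ≠ e.1 := hfan.nex r le_rfl
        have heq : F (jj-1) = F r :=
          traj_stall_unique hfinv hginv hfx hgx hprevS hrS h3 h4 h1 h2
        have := hfan.inj (jj-1) (by omega) r le_rfl heq
        omega
      have hp₀S : p₀.1 ∈ S := cross_touch hcross hp₀ ht₀ (Or.inr hcol₀) hxS
      have hfanB : IsFan E' col' e.1 e.2 r F := by
        constructor
        · exact hfan.f0
        · exact hfan.nex
        · exact hfan.inj
        · exact hfan.mem
        · intro i h1 h2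
          by_cases hijj : i = jj
          · subst hijj
            rw [hxedge_Fedge i h1, hFedge_jj]
            have hval : col' p₀ = c := by
              rw [hcol', invCol_touched ⟨hp₀, hp₀S, Or.inr hcol₀⟩,
                  if_neg (by rw [hcol₀]; exact Ne.symm hcd)]
            rw [hval, hcol']
            exact invCol_free_c_at hcd hcross hprevS hddfree_prev
          · rw [hxedge_Fedge i h1, hcol'_fan i h1 h2 hijj]
            rw [invCol_free_iff hcd (hγc i h1 h2) (hγd i h1 h2 hijj)]
            have := hfan.freeCond i h1 h2
            rwa [hxedge_Fedge i h1] at this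
      exact ⟨rotCol E' e F r dd col', hins ▸ rot_proper he' hprop' hfanB hddx' hddr'⟩

end Extend

section VizingMain

variable {V : Type*} [Fintype V] [DecidableEq V] {d : ℕ}
set_option linter.unusedSectionVars false

theorem vizing_coloring (A : Finset (V × V)) (hirr : ∀ p ∈ A, p.1 ≠ p.2)
    (honce : ∀ p ∈ A, (p.2, p.1) ∉ A)
    (hdeg : ∀ v, (A.filter (fun p => EVtouch p v)).card ≤ d) :
    ∃ col : V × V → Fin (d+1), EProper A col := by
  classical
  induction A using Finset.strongInduction with
  | _ A ih =>
    rcases A.eq_empty_or_nonempty with rfl | ⟨e, he⟩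
    · exact ⟨fun _ => ⟨0, by omega⟩, fun p hp => absurd hp (Finset.notMem_empty p)⟩
    · have hss : A.erase e ⊂ A := Finset.erase_ssubset he
      have hsub : A.erase e ⊆ A := hss.subset
      obtain ⟨col, hcol⟩ := ih (A.erase e) hss
        (fun p hp => hirr p (hsub hp))
        (fun p hp hc => honce p (hsub hp) (Finset.mem_of_mem_erase hc))
        (fun v => le_trans (Finset.card_le_card (Finset.filter_subset_filter _ hsub)) (hdeg v))
      exact extend_coloring A hirr honce hdeg e he col hcol

end VizingMain

theorem stmt_9 {V S : Type*} [Fintype V] [DecidableEq V] [Fintype S] [Nonempty S]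
    (E : Finset (V × V))
    (hirr : ∀ p ∈ E, p.1 ≠ p.2)
    (honce : ∀ p ∈ E, (p.2, p.1) ∉ E)
    (d : ℕ)
    (hdeg : ∀ v : V, (E.filter (fun p => p.1 = v ∨ p.2 = v)).card ≤ d)
    (lnφ : V → S → ℝ) (lnψ : V → V → S → S → ℝ)
    (hφ : ∀ i σ, 0 ≤ lnφ i σ) (hψ : ∀ i j σ σ', 0 ≤ lnψ i j σ σ')
    (H : (V → S) → ℝ)
    (hH : ∀ x, H x = ∑ i, lnφ i (x i) + ∑ p ∈ E, lnψ p.1 p.2 (x p.1) (x p.2))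
    (xstar : V → S) (hmax : ∀ x, H x ≤ H xstar) :
    ∑ p ∈ E,
      ((Finset.univ.sup' Finset.univ_nonempty fun σ : S × S => lnψ p.1 p.2 σ.1 σ.2)
        - (Finset.univ.inf' Finset.univ_nonempty fun σ : S × S => lnψ p.1 p.2 σ.1 σ.2))
      ≤ ((d : ℝ) + 1) * H xstar := by
  classical
  -- get a proper (d+1)-edge-coloring
  have hdeg' : ∀ v, (E.filter (fun p => EVtouch p v)).card ≤ d := by
    intro v
    have heq : E.filter (fun p => EVtouch p v) = E.filter (fun p => p.1 = v ∨ p.2 = v) :=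
      Finset.filter_congr (fun p _ => Iff.rfl)
    rw [heq]; exact hdeg v
  obtain ⟨col, hcol⟩ := vizing_coloring E hirr honce hdeg'
  -- best pair on each edge
  have hbest : ∀ p : V × V, ∃ b : S × S, b ∈ Finset.univ ∧
      (Finset.univ.sup' Finset.univ_nonempty fun σ : S × S => lnψ p.1 p.2 σ.1 σ.2)
        = lnψ p.1 p.2 b.1 b.2 := by
    intro p
    obtain ⟨b, hb, hbe⟩ := Finset.exists_mem_eq_sup' Finset.univ_nonempty
      (fun σ : S × S => lnψ p.1 p.2 σ.1 σ.2)
    exact ⟨b, hb, hbe⟩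
  choose σbest hσmem hσval using hbest
  -- assignment for color class k
  let xk : Fin (d+1) → V → S := fun k v =>
    if h : ∃ p, p ∈ E ∧ EVtouch p v ∧ col p = k then
      (if (Classical.choose h).1 = v then (σbest (Classical.choose h)).1
       else (σbest (Classical.choose h)).2)
    else xstar v
  have hxk : ∀ (k : Fin (d+1)) (p : V × V), p ∈ E → col p = k →
      lnψ p.1 p.2 (xk k p.1) (xk k p.2)
        = (Finset.univ.sup' Finset.univ_nonempty fun σ : S × S => lnψ p.1 p.2 σ.1 σ.2) := by
    intro k p hp hk
    have h1 : ∃ q, q ∈ E ∧ EVtouch q p.1 ∧ col q = k := ⟨p, hp, Or.inl rfl, hk⟩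
    have h2 : ∃ q, q ∈ E ∧ EVtouch q p.2 ∧ col q = k := ⟨p, hp, Or.inr rfl, hk⟩
    have hq1 := Classical.choose_spec h1
    have hq2 := Classical.choose_spec h2
    have he1 : Classical.choose h1 = p :=
      edge_unique hcol hq1.1 hp hq1.2.1 (Or.inl rfl) (hq1.2.2.trans hk.symm)
    have he2 : Classical.choose h2 = p :=
      edge_unique hcol hq2.1 hp hq2.2.1 (Or.inr rfl) (hq2.2.2.trans hk.symm)
    have hv1 : xk k p.1 = (σbest p).1 := by
      show dite _ _ _ = _
      rw [dif_pos h1, he1, if_pos rfl]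
    have hv2 : xk k p.2 = (σbest p).2 := by
      show dite _ _ _ = _
      rw [dif_pos h2, he2, if_neg (hirr p hp)]
    rw [hv1, hv2, hσval p]
  -- nonnegativity facts
  have hinf_nonneg : ∀ p : V × V,
      0 ≤ Finset.univ.inf' Finset.univ_nonempty (fun σ : S × S => lnψ p.1 p.2 σ.1 σ.2) := by
    intro p
    exact Finset.le_inf' _ _ (fun b _ => hψ _ _ _ _)
  have hH_ge : ∀ (k : Fin (d+1)),
      ∑ p ∈ E.filter (fun p => col p = k), lnψ p.1 p.2 (xk k p.1) (xk k p.2) ≤ H (xk k) := by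
    intro k
    rw [hH]
    have h1 : ∑ p ∈ E.filter (fun p => col p = k), lnψ p.1 p.2 (xk k p.1) (xk k p.2)
        ≤ ∑ p ∈ E, lnψ p.1 p.2 (xk k p.1) (xk k p.2) := by
      apply Finset.sum_le_sum_of_subset_of_nonneg (Finset.filter_subset _ _)
      intro p _ _
      exact hψ _ _ _ _
    have h2 : (0:ℝ) ≤ ∑ i, lnφ i (xk k i) := Finset.sum_nonneg (fun i _ => hφ _ _)
    linarith
  -- main chain
  have step1 : ∑ p ∈ E,
      ((Finset.univ.sup' Finset.univ_nonempty fun σ : S × S => lnψ p.1 p.2 σ.1 σ.2)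
        - (Finset.univ.inf' Finset.univ_nonempty fun σ : S × S => lnψ p.1 p.2 σ.1 σ.2))
      ≤ ∑ p ∈ E, (Finset.univ.sup' Finset.univ_nonempty fun σ : S × S => lnψ p.1 p.2 σ.1 σ.2) := by
    apply Finset.sum_le_sum
    intro p _
    have := hinf_nonneg p
    linarith
  have step2 : ∑ p ∈ E,
      (Finset.univ.sup' Finset.univ_nonempty fun σ : S × S => lnψ p.1 p.2 σ.1 σ.2)
      = ∑ k : Fin (d+1), ∑ p ∈ E.filter (fun p => col p = k),
        (Finset.univ.sup' Finset.univ_nonempty fun σ : S × S => lnψ p.1 p.2 σ.1 σ.2) := by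
    rw [← Finset.sum_fiberwise E (fun p => col p)
      (fun p => Finset.univ.sup' Finset.univ_nonempty fun σ : S × S => lnψ p.1 p.2 σ.1 σ.2)]
  have step3 : ∀ k : Fin (d+1),
      ∑ p ∈ E.filter (fun p => col p = k),
        (Finset.univ.sup' Finset.univ_nonempty fun σ : S × S => lnψ p.1 p.2 σ.1 σ.2)
      ≤ H xstar := by
    intro k
    have heq : ∑ p ∈ E.filter (fun p => col p = k),
        (Finset.univ.sup' Finset.univ_nonempty fun σ : S × S => lnψ p.1 p.2 σ.1 σ.2)
        = ∑ p ∈ E.filter (fun p => col p = k), lnψ p.1 p.2 (xk k p.1) (xk k p.2) := by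
      apply Finset.sum_congr rfl
      intro p hp
      obtain ⟨hp1, hp2⟩ := Finset.mem_filter.mp hp
      exact (hxk k p hp1 hp2).symm
    rw [heq]
    exact le_trans (hH_ge k) (hmax (xk k))
  have step4 : ∑ k : Fin (d+1), ∑ p ∈ E.filter (fun p => col p = k),
      (Finset.univ.sup' Finset.univ_nonempty fun σ : S × S => lnψ p.1 p.2 σ.1 σ.2)
      ≤ ∑ _k : Fin (d+1), H xstar := Finset.sum_le_sum (fun k _ => step3 k)
  have step5 : ∑ _k : Fin (d+1), H xstar = ((d:ℝ)+1) * H xstar := by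
    rw [Finset.sum_const, Finset.card_univ, Fintype.card_fin]
    push_cast
    ring
  calc ∑ p ∈ E, _ ≤ _ := step1
    _ = _ := step2
    _ ≤ _ := step4
    _ = _ := step5
end

section
/- Let G = (V,E) carry a pairwise MRF with energy H as above, and let V = V₁ ∪ ... ∪ V_p be a partition with E_k = (V_k × V_k) ∩ E and boundary B = E \ ∪_k E_k. If x̂ is the assignment obtained by exactly maximizing the restricted energy H_k on each subgraph G_k = (V_k, E_k) separately, then H(x̂) ≥ H(x̄*) - ∑_{(i,j)∈B} (ψ^U_{ij} - ψ^L_{ij}), where x̄* is any global maximizer of H. -/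
theorem stmt_10 {V S ι : Type*} [Fintype V] [DecidableEq V] [Fintype S] [Nonempty S]
    [Fintype ι] [DecidableEq ι]
    (E : Finset (V × V))
    (hirr : ∀ p ∈ E, p.1 ≠ p.2)
    (honce : ∀ p ∈ E, (p.2, p.1) ∉ E)
    (lnφ : V → S → ℝ) (lnψ : V → V → S → S → ℝ)
    (hφ : ∀ i σ, 0 ≤ lnφ i σ) (hψ : ∀ i j σ σ', 0 ≤ lnψ i j σ σ')
    (part : V → ι)
    (H : (V → S) → ℝ)
    (hH : ∀ x, H x = ∑ i, lnφ i (x i) + ∑ p ∈ E, lnψ p.1 p.2 (x p.1) (x p.2))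
    (Hk : ι → (V → S) → ℝ)
    (hHk : ∀ k x, Hk k x =
      (∑ i ∈ Finset.univ.filter (fun i => part i = k), lnφ i (x i)) +
      ∑ p ∈ E.filter (fun p => part p.1 = k ∧ part p.2 = k),
        lnψ p.1 p.2 (x p.1) (x p.2))
    (xhat : V → S) (hopt : ∀ k x, Hk k x ≤ Hk k xhat)
    (xstar : V → S) (hmax : ∀ x, H x ≤ H xstar) :
    H xstar -
      (∑ p ∈ E.filter (fun p => part p.1 ≠ part p.2),
        ((Finset.univ.sup' Finset.univ_nonempty fun σ : S × S => lnψ p.1 p.2 σ.1 σ.2)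
          - (Finset.univ.inf' Finset.univ_nonempty fun σ : S × S => lnψ p.1 p.2 σ.1 σ.2)))
      ≤ H xhat := by
  -- decomposition: H x = ∑ k, Hk k x + boundary sum
  have decomp : ∀ x : V → S, H x = (∑ k, Hk k x) +
      ∑ p ∈ E.filter (fun p => part p.1 ≠ part p.2), lnψ p.1 p.2 (x p.1) (x p.2) := by
    intro x
    rw [hH]
    simp only [hHk]
    rw [Finset.sum_add_distrib]
    have h1 : (∑ k, ∑ i ∈ Finset.univ.filter (fun i => part i = k), lnφ i (x i))
        = ∑ i, lnφ i (x i) := Finset.sum_fiberwise _ _ _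
    have h2 : (∑ k, ∑ p ∈ E.filter (fun p => part p.1 = k ∧ part p.2 = k),
          lnψ p.1 p.2 (x p.1) (x p.2))
        = ∑ p ∈ E.filter (fun p => part p.1 = part p.2),
            lnψ p.1 p.2 (x p.1) (x p.2) := by
      rw [← Finset.sum_fiberwise (E.filter (fun p => part p.1 = part p.2))
        (fun p => part p.1) (fun p => lnψ p.1 p.2 (x p.1) (x p.2))]
      refine Finset.sum_congr rfl fun k _ => Finset.sum_congr ?_ fun _ _ => rfl
      rw [Finset.filter_filter]
      apply Finset.filter_congr
      intro p _
      constructor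
      · rintro ⟨h1, h2⟩
        constructor <;> simp_all
      · rintro ⟨h1, h2⟩
        constructor <;> simp_all
    rw [h1, h2, ← Finset.sum_filter_add_sum_filter_not E (fun p => part p.1 = part p.2)
      (fun p => lnψ p.1 p.2 (x p.1) (x p.2))]
    ring
  have hsum : (∑ k, Hk k xstar) ≤ ∑ k, Hk k xhat :=
    Finset.sum_le_sum fun k _ => hopt k xstar
  have hub : ∀ x : V → S, ∀ p ∈ E.filter (fun p => part p.1 ≠ part p.2),
      lnψ p.1 p.2 (x p.1) (x p.2)
        ≤ Finset.univ.sup' Finset.univ_nonempty fun σ : S × S => lnψ p.1 p.2 σ.1 σ.2 := by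
    intro x p _
    exact Finset.le_sup' (f := fun σ : S × S => lnψ p.1 p.2 σ.1 σ.2)
      (Finset.mem_univ (x p.1, x p.2))
  have hlb : ∀ x : V → S, ∀ p ∈ E.filter (fun p => part p.1 ≠ part p.2),
      (Finset.univ.inf' Finset.univ_nonempty fun σ : S × S => lnψ p.1 p.2 σ.1 σ.2)
        ≤ lnψ p.1 p.2 (x p.1) (x p.2) := by
    intro x p _
    exact Finset.inf'_le (f := fun σ : S × S => lnψ p.1 p.2 σ.1 σ.2)
      (Finset.mem_univ (x p.1, x p.2))
  have hU := Finset.sum_le_sum (hub xstar)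
  have hL := Finset.sum_le_sum (hlb xhat)
  rw [decomp xstar, decomp xhat]
  rw [Finset.sum_sub_distrib]
  linarith
end

section
/- Let G = (V,E) carry a pairwise MRF with energy H, and suppose the per-partition algorithm is an α-approximation: for each k, H_k(x̂_k) ≥ (1/α)·max H_k. Then the combined assignment x̂ satisfies H(x̂) ≥ (1/α)·(H(x̄*) - ∑_{(i,j)∈B} (ψ^U_{ij} - ψ^L_{ij})), where B is the set of edges crossing partitions. -/
theorem stmt_11 {V S ι : Type*} [Fintype V] [DecidableEq V] [Fintype S] [Nonempty S]
    [Fintype ι] [DecidableEq ι]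
    (E : Finset (V × V))
    (hirr : ∀ p ∈ E, p.1 ≠ p.2)
    (honce : ∀ p ∈ E, (p.2, p.1) ∉ E)
    (lnφ : V → S → ℝ) (lnψ : V → V → S → S → ℝ)
    (hφ : ∀ i σ, 0 ≤ lnφ i σ) (hψ : ∀ i j σ σ', 0 ≤ lnψ i j σ σ')
    (part : V → ι)
    (H : (V → S) → ℝ)
    (hH : ∀ x, H x = ∑ i, lnφ i (x i) + ∑ p ∈ E, lnψ p.1 p.2 (x p.1) (x p.2))
    (Hk : ι → (V → S) → ℝ)
    (hHk : ∀ k x, Hk k x =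
      (∑ i ∈ Finset.univ.filter (fun i => part i = k), lnφ i (x i)) +
      ∑ p ∈ E.filter (fun p => part p.1 = k ∧ part p.2 = k),
        lnψ p.1 p.2 (x p.1) (x p.2))
    (α : ℝ) (hα : 1 ≤ α)
    (xhat : V → S) (hopt : ∀ k x, Hk k x ≤ α * Hk k xhat)
    (xstar : V → S) (hmax : ∀ x, H x ≤ H xstar) :
    (1 / α) * (H xstar -
      ∑ p ∈ E.filter (fun p => part p.1 ≠ part p.2),
        ((Finset.univ.sup' Finset.univ_nonempty fun σ : S × S => lnψ p.1 p.2 σ.1 σ.2)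
          - (Finset.univ.inf' Finset.univ_nonempty fun σ : S × S => lnψ p.1 p.2 σ.1 σ.2)))
      ≤ H xhat := by
  have hα0 : (0:ℝ) < α := lt_of_lt_of_le one_pos hα
  set B := E.filter (fun p => part p.1 ≠ part p.2) with hB
  -- decomposition of H
  have hdecomp : ∀ x : V → S, H x = (∑ k, Hk k x) +
      ∑ p ∈ B, lnψ p.1 p.2 (x p.1) (x p.2) := by
    intro x
    have h1 : ∑ k, Hk k x =
        (∑ i, lnφ i (x i)) +
        ∑ p ∈ E.filter (fun p => part p.1 = part p.2), lnψ p.1 p.2 (x p.1) (x p.2) := by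
      simp only [hHk, Finset.sum_add_distrib]
      congr 1
      · exact Finset.sum_fiberwise _ _ _
      · rw [Finset.sum_filter]
        simp only [Finset.sum_filter]
        rw [Finset.sum_comm]
        refine Finset.sum_congr rfl fun p _ => ?_
        by_cases h : part p.1 = part p.2
        · rw [if_pos h]
          rw [show (fun k => if part p.1 = k ∧ part p.2 = k then lnψ p.1 p.2 (x p.1) (x p.2) else 0)
              = fun k => if k = part p.1 then lnψ p.1 p.2 (x p.1) (x p.2) else 0 from ?_]
          · simp
          · funext k
            congr 1
            simp only [eq_iff_iff]
            constructor
            · rintro ⟨h1, _⟩; exact h1.symm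
            · rintro rfl; exact ⟨rfl, h.symm⟩
        · rw [if_neg h]
          refine Finset.sum_eq_zero fun k _ => ?_
          rw [if_neg]
          rintro ⟨h1, h2⟩
          exact h (h1.trans h2.symm)
    rw [hH x, h1, ← Finset.sum_filter_add_sum_filter_not E (fun p => part p.1 = part p.2)
      (fun p => lnψ p.1 p.2 (x p.1) (x p.2))]
    ring
  -- bounds on cross-edge terms
  have hub : ∀ x : V → S, ∑ p ∈ B, lnψ p.1 p.2 (x p.1) (x p.2) ≤
      ∑ p ∈ B, Finset.univ.sup' Finset.univ_nonempty (fun σ : S × S => lnψ p.1 p.2 σ.1 σ.2) := by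
    intro x
    refine Finset.sum_le_sum fun p _ => ?_
    exact Finset.le_sup' (f := fun σ : S × S => lnψ p.1 p.2 σ.1 σ.2) (Finset.mem_univ (x p.1, x p.2))
  have hlb : ∀ x : V → S,
      ∑ p ∈ B, Finset.univ.inf' Finset.univ_nonempty (fun σ : S × S => lnψ p.1 p.2 σ.1 σ.2) ≤
      ∑ p ∈ B, lnψ p.1 p.2 (x p.1) (x p.2) := by
    intro x
    refine Finset.sum_le_sum fun p _ => ?_
    exact Finset.inf'_le (f := fun σ : S × S => lnψ p.1 p.2 σ.1 σ.2) (Finset.mem_univ (x p.1, x p.2))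
  have hInf0 : 0 ≤ ∑ p ∈ B, Finset.univ.inf' Finset.univ_nonempty
      (fun σ : S × S => lnψ p.1 p.2 σ.1 σ.2) := by
    refine Finset.sum_nonneg fun p _ => ?_
    obtain ⟨σ, _, hσ⟩ := Finset.exists_mem_eq_inf' (Finset.univ_nonempty)
      (fun σ : S × S => lnψ p.1 p.2 σ.1 σ.2)
    rw [hσ]; exact hψ _ _ _ _
  have hS : ∑ k, Hk k xstar ≤ α * ∑ k, Hk k xhat := by
    rw [Finset.mul_sum]
    exact Finset.sum_le_sum fun k _ => hopt k xstar
  have hSnn : 0 ≤ ∑ k, Hk k xhat := by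
    refine Finset.sum_nonneg fun k _ => ?_
    rw [hHk]
    refine add_nonneg (Finset.sum_nonneg fun i _ => hφ _ _) (Finset.sum_nonneg fun p _ => hψ _ _ _ _)
  rw [Finset.sum_sub_distrib]
  have h1 := hdecomp xstar
  have h2 := hdecomp xhat
  have h3 := hub xstar
  have h4 := hlb xhat
  rw [div_mul_eq_mul_div, one_mul, div_le_iff₀ hα0]
  set Sup := ∑ p ∈ B, Finset.univ.sup' Finset.univ_nonempty
      (fun σ : S × S => lnψ p.1 p.2 σ.1 σ.2)
  set Inf := ∑ p ∈ B, Finset.univ.inf' Finset.univ_nonempty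
      (fun σ : S × S => lnψ p.1 p.2 σ.1 σ.2)
  nlinarith [mul_le_mul_of_nonneg_left hSnn (le_of_lt hα0)]
end
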